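/- Fix 0 < η_- < a < b < η. Define ĝ(x) = arccos((2x² − η² − η_-²)/(η² − η_-²)) and g̃(x) = arccos(x/η) for x ∈ (η_-, η). Then for any σ, a ∈ (η_-, η), |ĝ(σ) − ĝ(a)| ≥ 2 |g̃(σ) − g̃(a)|. -/

import Mathlib

open Real Set

private lemma arccos_key_deriv (ηm η : ℝ) (h0 : 0 < ηm) (hη : ηm < η) (x : ℝ)
    (hx : x ∈ Set.Ioo ηm η) :
    ∃ d, HasDerivAt (fun y =>
        Real.arccos ((2 * y ^ 2 - η ^ 2 - ηm ^ 2) / (η ^ 2 - ηm ^ 2))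
          - 2 * Real.arccos (y / η)) d x ∧ d ≤ 0 := by
  obtain ⟨hx1, hx2⟩ := hx
  have hx0 : 0 < x := h0.trans hx1
  have hη0 : 0 < η := h0.trans hη
  have hc : 0 < η ^ 2 - ηm ^ 2 := by nlinarith
  have hq : 0 < x ^ 2 - ηm ^ 2 := by nlinarith
  have hp : 0 < η ^ 2 - x ^ 2 := by nlinarith
  set c := η ^ 2 - ηm ^ 2 with hcdef
  set f : ℝ → ℝ := fun y => (2 * y ^ 2 - η ^ 2 - ηm ^ 2) / c with hf
  have hf1 : f x < 1 := by
    rw [hf]; simp only []; rw [div_lt_one hc]; nlinarith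
  have hf2 : (-1 : ℝ) < f x := by
    rw [hf]; simp only []; rw [lt_div_iff₀ hc]; nlinarith
  have hdf : HasDerivAt f (4 * x / c) x := by
    have h1 : HasDerivAt (fun y : ℝ => 2 * y ^ 2 - η ^ 2 - ηm ^ 2) (4 * x) x := by
      have := ((hasDerivAt_pow 2 x).const_mul (2 : ℝ)).sub_const (η ^ 2)
      have := this.sub_const (ηm ^ 2)
      convert this using 1
      · rfl
      · rfl
      · push_cast; ring
    simpa [hf] using h1.div_const c
  have hg : HasDerivAt (fun y => Real.arccos (f y))
      (-(1 / √(1 - f x ^ 2)) * (4 * x / c)) x :=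
    (Real.hasDerivAt_arccos hf2.ne' hf1.ne).comp x hdf
  have hdq : HasDerivAt (fun y : ℝ => y / η) (1 / η) x := by
    simpa using (hasDerivAt_id x).div_const η
  have hxη1 : x / η < 1 := (div_lt_one hη0).2 hx2
  have hxη2 : (-1 : ℝ) < x / η := by
    have : 0 < x / η := div_pos hx0 hη0
    linarith
  have hgt : HasDerivAt (fun y => Real.arccos (y / η))
      (-(1 / √(1 - (x / η) ^ 2)) * (1 / η)) x :=
    (Real.hasDerivAt_arccos hxη2.ne' hxη1.ne).comp (h := fun y : ℝ => y / η) x hdq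
  refine ⟨_, hg.sub (hgt.const_mul 2), ?_⟩
  -- compute the square roots
  set sp := √(η ^ 2 - x ^ 2) with hspdef
  set sq := √(x ^ 2 - ηm ^ 2) with hsqdef
  have hsp : 0 < sp := Real.sqrt_pos.2 hp
  have hsq : 0 < sq := Real.sqrt_pos.2 hq
  have hsqx : sq ≤ x := by
    rw [hsqdef]
    calc √(x ^ 2 - ηm ^ 2) ≤ √(x ^ 2) := Real.sqrt_le_sqrt (by nlinarith)
      _ = x := Real.sqrt_sq hx0.le
  have h1f : 1 - f x ^ 2 = 4 * (η ^ 2 - x ^ 2) * (x ^ 2 - ηm ^ 2) / c ^ 2 := by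
    rw [hf]; simp only []
    field_simp
    ring
  have hs1 : √(1 - f x ^ 2) = 2 * sp * sq / c := by
    rw [h1f, show 4 * (η ^ 2 - x ^ 2) * (x ^ 2 - ηm ^ 2) / c ^ 2 = (2 * sp * sq / c) ^ 2 by
      rw [div_pow, mul_pow, mul_pow, hspdef, hsqdef, Real.sq_sqrt hp.le, Real.sq_sqrt hq.le]
      ring]
    exact Real.sqrt_sq (by positivity)
  have h1x : 1 - (x / η) ^ 2 = (η ^ 2 - x ^ 2) / η ^ 2 := by
    field_simp
  have hs2 : √(1 - (x / η) ^ 2) = sp / η := by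
    rw [h1x, show (η ^ 2 - x ^ 2) / η ^ 2 = (sp / η) ^ 2 by
      rw [div_pow, hspdef, Real.sq_sqrt hp.le]]
    exact Real.sqrt_sq (by positivity)
  rw [hs1, hs2]
  have e1 : -(1 / (2 * sp * sq / c)) * (4 * x / c) = -(2 * x / (sp * sq)) := by
    field_simp
    ring
  have e2 : -(1 / (sp / η)) * (1 / η) = -(1 / sp) := by
    field_simp
  rw [e1, e2]
  have hfinal : 2 * (1 / sp) ≤ 2 * x / (sp * sq) := by
    rw [mul_one_div, div_le_div_iff₀ hsp (by positivity)]
    nlinarith [hsp.le]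
  linarith

private lemma arccos_key (ηm η : ℝ) (h0 : 0 < ηm) (hη : ηm < η)
    (σ a : ℝ) (hσ : σ ∈ Set.Ioo ηm η) (ha : a ∈ Set.Ioo ηm η) (hle : a ≤ σ) :
    2 * |Real.arccos (a / η) - Real.arccos (σ / η)| ≤
      |Real.arccos ((2 * a ^ 2 - η ^ 2 - ηm ^ 2) / (η ^ 2 - ηm ^ 2)) -
        Real.arccos ((2 * σ ^ 2 - η ^ 2 - ηm ^ 2) / (η ^ 2 - ηm ^ 2))| := by
  obtain ⟨hσ1, hσ2⟩ := hσ
  obtain ⟨ha1, ha2⟩ := ha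
  have hη0 : 0 < η := h0.trans hη
  have hanti : AntitoneOn (fun y =>
      Real.arccos ((2 * y ^ 2 - η ^ 2 - ηm ^ 2) / (η ^ 2 - ηm ^ 2))
        - 2 * Real.arccos (y / η)) (Set.Ioo ηm η) := by
    apply antitoneOn_of_deriv_nonpos (convex_Ioo _ _)
    · intro y hy
      obtain ⟨d, hd, _⟩ := arccos_key_deriv ηm η h0 hη y hy
      exact hd.continuousAt.continuousWithinAt
    · rw [interior_Ioo]
      intro y hy
      obtain ⟨d, hd, _⟩ := arccos_key_deriv ηm η h0 hη y hy
      exact hd.differentiableAt.differentiableWithinAt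
    · rw [interior_Ioo]
      intro y hy
      obtain ⟨d, hd, hd0⟩ := arccos_key_deriv ηm η h0 hη y hy
      rw [hd.deriv]
      exact hd0
  have hmema : a / η ∈ Set.Icc (-1 : ℝ) 1 := by
    constructor
    · have : 0 < a / η := div_pos (h0.trans ha1) hη0
      linarith
    · exact ((div_le_one hη0).2 ha2.le)
  have hmemσ : σ / η ∈ Set.Icc (-1 : ℝ) 1 := by
    constructor
    · have : 0 < σ / η := div_pos (h0.trans hσ1) hη0
      linarith
    · exact ((div_le_one hη0).2 hσ2.le)
  have harc : Real.arccos (σ / η) ≤ Real.arccos (a / η) :=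
    Real.strictAntiOn_arccos.antitoneOn hmema hmemσ (by gcongr)
  have hh := hanti (Set.mem_Ioo.2 ⟨ha1, ha2⟩) (Set.mem_Ioo.2 ⟨hσ1, hσ2⟩) hle
  simp only [] at hh
  rw [abs_of_nonneg (by linarith)]
  calc 2 * (Real.arccos (a / η) - Real.arccos (σ / η))
      ≤ Real.arccos ((2 * a ^ 2 - η ^ 2 - ηm ^ 2) / (η ^ 2 - ηm ^ 2)) -
        Real.arccos ((2 * σ ^ 2 - η ^ 2 - ηm ^ 2) / (η ^ 2 - ηm ^ 2)) := by linarith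
    _ ≤ _ := le_abs_self _

/-- with `0 < η₋ < η`, `ĝ(x) = arccos((2x² − η² − η₋²)/(η² − η₋²))`
and `g̃(x) = arccos(x/η)`, for any `σ, a ∈ (η₋, η)` one has
`|ĝ(σ) − ĝ(a)| ≥ 2 |g̃(σ) − g̃(a)|`. -/
theorem arccos_mapping_comparison
    (ηm η : ℝ) (h0 : 0 < ηm) (hη : ηm < η)
    (σ a : ℝ) (hσ : σ ∈ Set.Ioo ηm η) (ha : a ∈ Set.Ioo ηm η) :
    2 * |Real.arccos (a / η) - Real.arccos (σ / η)| ≤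
      |Real.arccos ((2 * a ^ 2 - η ^ 2 - ηm ^ 2) / (η ^ 2 - ηm ^ 2)) -
        Real.arccos ((2 * σ ^ 2 - η ^ 2 - ηm ^ 2) / (η ^ 2 - ηm ^ 2))| := by
  rcases le_total a σ with hle | hle
  · exact arccos_key ηm η h0 hη σ a hσ ha hle
  · rw [abs_sub_comm (Real.arccos (a / η)),
      abs_sub_comm (Real.arccos ((2 * a ^ 2 - η ^ 2 - ηm ^ 2) / (η ^ 2 - ηm ^ 2)))]
    exact arccos_key ηm η h0 hη a σ ha hσ hle
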